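/- For finite measures η, χ on ℝ with finite first moments, η ≤ χ (setwise, i.e., η(A) ≤ χ(A) for all Borel A) if and only if P_χ - P_η is convex, where P_η(k) = ∫(k-x)^+ η(dx). -/

import Mathlib

open MeasureTheory Set Filter

noncomputable def pot (eta : Measure ℝ) (k : ℝ) : ℝ := ∫ x, max (k - x) 0 ∂eta

noncomputable def cpot (eta : Measure ℝ) (k : ℝ) : ℝ := ∫ x, max (x - k) 0 ∂eta

/-- `c` is the convex hull (largest convex minorant) of `f`. -/
def IsConvexHull (f c : ℝ → ℝ) : Prop :=
  ConvexOn ℝ Set.univ c ∧ (∀ x, c x ≤ f x) ∧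
    ∀ g : ℝ → ℝ, ConvexOn ℝ Set.univ g → (∀ x, g x ≤ f x) → ∀ x, g x ≤ c x

/-- Convex order: `∫ f dη ≤ ∫ f dχ` for all convex `f` for which both integrals exist. -/
def Cx (eta chi : Measure ℝ) : Prop :=
  ∀ f : ℝ → ℝ, ConvexOn ℝ Set.univ f → Integrable f eta → Integrable f chi →
    ∫ x, f x ∂eta ≤ ∫ x, f x ∂chi

/-- Extended convex order: `∫ f dη ≤ ∫ f dχ` for all nonnegative convex `f`. -/
def ECx (eta chi : Measure ℝ) : Prop :=
  ∀ f : ℝ → ℝ, ConvexOn ℝ Set.univ f → (∀ x, 0 ≤ f x) →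
    ∫⁻ x, ENNReal.ofReal (f x) ∂eta ≤ ∫⁻ x, ENNReal.ofReal (f x) ∂chi

/-- The class `𝒟(a, b)`: nonnegative, nondecreasing, convex functions vanishing at `-∞`
and asymptotic to `a * z - b` at `+∞`. -/
def MemD (a b : ℝ) (f : ℝ → ℝ) : Prop :=
  ConvexOn ℝ Set.univ f ∧ Monotone f ∧ (∀ x, 0 ≤ f x) ∧
    Tendsto f atBot (nhds 0) ∧
    Tendsto (fun z => f z - (a * z - b)) atTop (nhds 0)

/-- `S` is the shadow of `μ` in `ν`. -/
def IsShadow (mu nu S : Measure ℝ) : Prop :=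
  Cx mu S ∧ S ≤ nu ∧ ∀ eta : Measure ℝ, Cx mu eta → eta ≤ nu → Cx S eta

/-- `T` is the counter-shadow of `μ` in `ν`. -/
def IsCounterShadow (mu nu T : Measure ℝ) : Prop :=
  Cx mu T ∧ T ≤ nu ∧ ∀ eta : Measure ℝ, Cx mu eta → eta ≤ nu → Cx eta T

open scoped Topology

lemma integrable_posPart (mu : Measure ℝ) [IsFiniteMeasure mu]
    (hint : Integrable (fun x => x) mu) (k : ℝ) :
    Integrable (fun x => max (k - x) 0) mu := by
  have hb : Integrable (fun x : ℝ => |k| + |x|) mu := (integrable_const _).add hint.abs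
  refine hb.mono' ?_ ?_
  · exact ((continuous_const.sub continuous_id).max continuous_const).aestronglyMeasurable
  · filter_upwards with x
    rw [Real.norm_eq_abs, abs_of_nonneg (le_max_right _ _)]
    calc max (k - x) 0 ≤ |k - x| := max_le (le_abs_self _) (abs_nonneg _)
      _ ≤ |k| + |x| := by simpa [sub_eq_add_neg] using abs_add_le k (-x)

lemma convexOn_pot (mu : Measure ℝ) [IsFiniteMeasure mu]
    (hint : Integrable (fun x => x) mu) : ConvexOn ℝ Set.univ (pot mu) := by
  refine ⟨convex_univ, fun a _ b _ wa wb hwa hwb hw => ?_⟩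
  have h1 := integrable_posPart mu hint a
  have h2 := integrable_posPart mu hint b
  simp only [smul_eq_mul, pot]
  have h3 := integrable_posPart mu hint (wa * a + wb * b)
  calc ∫ x, max (wa * a + wb * b - x) 0 ∂mu
      ≤ ∫ x, (wa * max (a - x) 0 + wb * max (b - x) 0) ∂mu := by
        refine integral_mono h3 ((h1.const_mul wa).add (h2.const_mul wb)) fun x => ?_
        have h4 : wa * a + wb * b - x = wa * (a - x) + wb * (b - x) := by
          linear_combination x * hw
        refine max_le ?_ (by positivity)
        rw [h4]
        exact add_le_add (mul_le_mul_of_nonneg_left (le_max_left _ _) hwa)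
          (mul_le_mul_of_nonneg_left (le_max_left _ _) hwb)
    _ = wa * ∫ x, max (a - x) 0 ∂mu + wb * ∫ x, max (b - x) 0 ∂mu := by
        rw [integral_add (h1.const_mul wa) (h2.const_mul wb), integral_const_mul,
          integral_const_mul]

lemma pot_rderiv (mu : Measure ℝ) [IsFiniteMeasure mu]
    (hint : Integrable (fun x => x) mu) (k : ℝ) :
    Tendsto (fun h : ℝ => (pot mu (k + h) - pot mu k) / h) (𝓝[>] 0)
      (𝓝 (mu (Iic k)).toReal) := by
  have key : Tendsto (fun h : ℝ => ∫ x, (max (k + h - x) 0 - max (k - x) 0) / h ∂mu) (𝓝[>] 0)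
      (𝓝 (∫ x, (Iic k).indicator (fun _ => (1:ℝ)) x ∂mu)) := by
    refine tendsto_integral_filter_of_dominated_convergence (fun _ => (1:ℝ)) ?_ ?_
      (integrable_const _) ?_
    · filter_upwards with h
      exact ((((continuous_const.sub continuous_id).max continuous_const).sub
        (((continuous_const.sub continuous_id)).max continuous_const)).div_const
        h).aestronglyMeasurable
    · filter_upwards [self_mem_nhdsWithin] with h hh
      have hh' : (0:ℝ) < h := hh
      filter_upwards with x
      have h1 : max (k - x) 0 ≤ max (k + h - x) 0 := max_le_max (by linarith) le_rfl
      have h2 : max (k + h - x) 0 ≤ max (k - x) 0 + h := by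
        rcases le_total (k + h - x) 0 with hc | hc
        · rw [max_eq_right hc]; positivity
        · rw [max_eq_left hc]
          have : k - x ≤ max (k - x) 0 := le_max_left _ _
          linarith
      rw [Real.norm_eq_abs, abs_div, abs_of_pos hh', div_le_one hh',
        abs_of_nonneg (by linarith)]
      linarith
    · filter_upwards with x
      by_cases hx : x ≤ k
      · rw [indicator_of_mem (mem_Iic.2 hx)]
        refine tendsto_const_nhds.congr' ?_
        filter_upwards [self_mem_nhdsWithin] with h hh
        have hh' : (0:ℝ) < h := hh
        rw [max_eq_left (by linarith), max_eq_left (by linarith)]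
        field_simp
        ring
      · push_neg at hx
        rw [indicator_of_notMem (by simpa using hx)]
        refine tendsto_const_nhds.congr' ?_
        filter_upwards [Ioo_mem_nhdsGT_of_mem ⟨le_rfl, sub_pos.2 hx⟩] with h hh
        rw [max_eq_right (by linarith [hh.2]), max_eq_right (by linarith)]
        simp
  have heq : (fun h : ℝ => ∫ x, (max (k + h - x) 0 - max (k - x) 0) / h ∂mu)
      = fun h : ℝ => (pot mu (k + h) - pot mu k) / h := by
    funext h
    simp only [pot]
    rw [integral_div, integral_sub (integrable_posPart mu hint (k + h))
      (integrable_posPart mu hint k)]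
  rw [heq] at key
  rwa [integral_indicator_const _ measurableSet_Iic, smul_eq_mul, mul_one] at key

lemma slope_quot_mono {f : ℝ → ℝ} (hf : ConvexOn ℝ Set.univ f) {a b h : ℝ} (hab : a ≤ b)
    (hh : 0 < h) : (f (a + h) - f a) / h ≤ (f (b + h) - f b) / h := by
  rcases eq_or_lt_of_le hab with rfl | hab
  · exact le_rfl
  have s1 : (f (a + h) - f a) / (a + h - a) ≤ (f (b + h) - f a) / (b + h - a) :=
    hf.secant_mono (mem_univ _) (mem_univ _) (mem_univ _)
      (by intro hc; linarith [congrArg id hc]) (by intro hc; linarith [congrArg id hc])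
      (by linarith)
  have s2 : (f a - f (b + h)) / (a - (b + h)) ≤ (f b - f (b + h)) / (b - (b + h)) :=
    hf.secant_mono (mem_univ _) (mem_univ _) (mem_univ _)
      (by intro hc; linarith [congrArg id hc]) (by intro hc; linarith [congrArg id hc]) hab.le
  have e1 : a + h - a = h := by ring
  have e2 : (f a - f (b + h)) / (a - (b + h)) = (f (b + h) - f a) / (b + h - a) := by
    rw [← neg_div_neg_eq, neg_sub, neg_sub]
  have e3 : (f b - f (b + h)) / (b - (b + h)) = (f (b + h) - f b) / h := by
    rw [← neg_div_neg_eq, neg_sub, neg_sub, add_sub_cancel_left]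
  rw [e1] at s1
  rw [e2, e3] at s2
  exact s1.trans s2

lemma cdf_tendsto_right (mu : Measure ℝ) [IsFiniteMeasure mu] (k : ℝ) :
    Tendsto (fun x => (mu (Iic x)).toReal) (𝓝[>] k) (𝓝 (mu (Iic k)).toReal) := by
  have h1 : Tendsto (fun x => mu (Iic x)) (𝓝[>] k) (𝓝 (mu (⋂ r > k, Iic r))) :=
    tendsto_measure_biInter_gt (fun r _ => measurableSet_Iic.nullMeasurableSet)
      (fun i j _ hij => Iic_subset_Iic.2 hij) ⟨k + 1, by linarith, measure_ne_top _ _⟩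
  have h2 : (⋂ r > k, Iic r) = Iic k := by
    ext x
    simp only [mem_iInter, mem_Iic]
    constructor
    · intro hx
      by_contra hc
      push_neg at hc
      have := hx ((k + x) / 2) (by linarith)
      linarith
    · intro hx r hr
      linarith
  rw [h2] at h1
  exact (ENNReal.tendsto_toReal (measure_ne_top _ _)).comp h1

lemma cdf_tendsto_atBot (mu : Measure ℝ) [IsFiniteMeasure mu] :
    Tendsto (fun x => (mu (Iic x)).toReal) atBot (𝓝 0) := by
  have h1 : Tendsto (fun x : ℝ => mu (Iic x)) atBot (𝓝 (mu (⋂ r : ℝ, Iic r))) :=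
    tendsto_measure_iInter_atBot (fun r => measurableSet_Iic.nullMeasurableSet)
      (fun i j hij => Iic_subset_Iic.2 hij) ⟨0, measure_ne_top _ _⟩
  have h2 : (⋂ r : ℝ, Iic r) = ∅ := by
    ext x
    simp only [mem_iInter, mem_Iic, mem_empty_iff_false, iff_false]
    push_neg
    exact ⟨x - 1, by linarith⟩
  rw [h2, measure_empty] at h1
  simpa [Function.comp_def] using (ENNReal.tendsto_toReal (by simp)).comp h1

theorem stmt6 (eta chi : Measure ℝ) [IsFiniteMeasure eta] [IsFiniteMeasure chi]
    (hinte : Integrable (fun x => x) eta) (hintc : Integrable (fun x => x) chi) :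
    eta ≤ chi ↔ ConvexOn ℝ Set.univ (fun k => pot chi k - pot eta k) := by
  constructor
  · intro hle
    have hfin : IsFiniteMeasure (chi - eta) := isFiniteMeasure_of_le chi Measure.sub_le
    have hint : Integrable (fun x => x) (chi - eta) := hintc.mono_measure Measure.sub_le
    have hcv := convexOn_pot (chi - eta) hint
    have key : (fun k => pot chi k - pot eta k) = pot (chi - eta) := by
      funext k
      have hs : chi - eta + eta = chi := Measure.sub_add_cancel_of_le hle
      have h5 : pot chi k = pot (chi - eta) k + pot eta k := by
        simp only [pot]
        conv_lhs => rw [← hs]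
        rw [integral_add_measure (integrable_posPart _ hint k)
          (integrable_posPart _ hinte k)]
      linarith
    rw [key]
    exact hcv
  · intro hcvx
    set g := fun k => (chi (Iic k)).toReal - (eta (Iic k)).toReal with hgdef
    have hgmono : Monotone g := by
      intro a b hab
      have ha : Tendsto (fun h : ℝ =>
          ((pot chi (a + h) - pot eta (a + h)) - (pot chi a - pot eta a)) / h)
          (𝓝[>] 0) (𝓝 (g a)) := by
        have := (pot_rderiv chi hintc a).sub (pot_rderiv eta hinte a)
        refine this.congr fun h => ?_
        ring
      have hb : Tendsto (fun h : ℝ =>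
          ((pot chi (b + h) - pot eta (b + h)) - (pot chi b - pot eta b)) / h)
          (𝓝[>] 0) (𝓝 (g b)) := by
        have := (pot_rderiv chi hintc b).sub (pot_rderiv eta hinte b)
        refine this.congr fun h => ?_
        ring
      refine le_of_tendsto_of_tendsto ha hb ?_
      filter_upwards [self_mem_nhdsWithin] with h hh
      exact slope_quot_mono hcvx hab hh
    have hg0 : Tendsto g atBot (𝓝 0) := by
      have := (cdf_tendsto_atBot chi).sub (cdf_tendsto_atBot eta)
      simpa using this
    have hgnn : ∀ x, 0 ≤ g x := fun x =>
      le_of_tendsto hg0 ((eventually_le_atBot x).mono fun y hy => hgmono hy)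
    have hgrc : ∀ x, ContinuousWithinAt g (Ici x) x := by
      intro x
      rw [← continuousWithinAt_Ioi_iff_Ici]
      exact (cdf_tendsto_right chi x).sub (cdf_tendsto_right eta x)
    let G : StieltjesFunction ℝ := ⟨g, hgmono, hgrc⟩
    have hIic : ∀ x, G.measure (Iic x) = ENNReal.ofReal (g x) := by
      intro x
      rw [G.measure_Iic hg0, sub_zero]
    have hle' : ∀ x, eta (Iic x) ≤ chi (Iic x) := by
      intro x
      rw [← ENNReal.toReal_le_toReal (measure_ne_top _ _) (measure_ne_top _ _)]
      have h1 := hgnn x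
      have h2 : g x = (chi (Iic x)).toReal - (eta (Iic x)).toReal := rfl
      rw [h2] at h1
      linarith
    have hext : chi = eta + G.measure := by
      refine Measure.ext_of_Iic chi (eta + G.measure) fun a => ?_
      rw [Measure.add_apply, hIic a]
      have hga : g a = (chi (Iic a)).toReal - (eta (Iic a)).toReal := rfl
      rw [hga, ENNReal.ofReal_sub _ ENNReal.toReal_nonneg,
        ENNReal.ofReal_toReal (measure_ne_top _ _), ENNReal.ofReal_toReal (measure_ne_top _ _),
        add_comm, tsub_add_cancel_of_le (hle' a)]
    rw [hext]
    exact Measure.le_add_right le_rfl
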